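/- Let A > 0 and f(t) = A·t². Then the double integral ∫₁^∞ ∫_t^∞ (r/t)·e^{f(t) − f(r)} dr dt diverges (equals +∞). -/

import Mathlib

open MeasureTheory Set

lemma hasDerivAt_aux (A : ℝ) (hA : 0 < A) (x : ℝ) :
    HasDerivAt (fun r : ℝ => -Real.exp (-A * r ^ 2) / (2 * A)) (x * Real.exp (-A * x ^ 2)) x := by
  have h1 : HasDerivAt (fun r : ℝ => -A * r ^ 2) (-A * (2 * x)) x := by
    simpa using ((hasDerivAt_pow 2 x).const_mul (-A))
  have h2 := (h1.exp).neg.div_const (2 * A)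
  refine h2.congr_deriv ?_
  rw [div_eq_iff (by positivity)]
  ring

lemma tendsto_aux (A : ℝ) (hA : 0 < A) :
    Filter.Tendsto (fun r : ℝ => -Real.exp (-A * r ^ 2) / (2 * A)) Filter.atTop (nhds 0) := by
  have : Filter.Tendsto (fun r : ℝ => -A * r ^ 2) Filter.atTop Filter.atBot := by
    exact (Filter.tendsto_pow_atTop (two_ne_zero)).const_mul_atTop_of_neg (by linarith)
  have h := (Real.tendsto_exp_atBot.comp this).neg.div_const (2 * A)
  simpa using h

lemma integrableOn_aux (A : ℝ) (hA : 0 < A) (t : ℝ) (ht : 0 < t) :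
    IntegrableOn (fun r : ℝ => r * Real.exp (-A * r ^ 2)) (Ioi t) := by
  refine integrableOn_Ioi_deriv_of_nonneg' (fun x _ => hasDerivAt_aux A hA x)
    (fun x hx => ?_) (tendsto_aux A hA)
  exact mul_nonneg (ht.trans hx).le (Real.exp_pos _).le

lemma integral_aux (A : ℝ) (hA : 0 < A) (t : ℝ) (ht : 0 < t) :
    ∫ r in Ioi t, r * Real.exp (-A * r ^ 2) = Real.exp (-A * t ^ 2) / (2 * A) := by
  rw [integral_Ioi_of_hasDerivAt_of_tendsto' (fun x _ => hasDerivAt_aux A hA x)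
    (integrableOn_aux A hA t ht) (tendsto_aux A hA)]
  field_simp
  ring

lemma inner_eq (A : ℝ) (hA : 0 < A) (t : ℝ) (ht : 0 < t) :
    (∫⁻ r in Ioi t, ENNReal.ofReal ((r / t) * Real.exp (A * t ^ 2 - A * r ^ 2)))
      = ENNReal.ofReal (1 / (2 * A * t)) := by
  have hfun : ∀ r : ℝ, (r / t) * Real.exp (A * t ^ 2 - A * r ^ 2)
      = (Real.exp (A * t ^ 2) / t) * (r * Real.exp (-A * r ^ 2)) := by
    intro r
    rw [show A * t ^ 2 - A * r ^ 2 = A * t ^ 2 + (-A * r ^ 2) by ring, Real.exp_add]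
    ring
  have hint : IntegrableOn (fun r : ℝ => (Real.exp (A * t ^ 2) / t) * (r * Real.exp (-A * r ^ 2)))
      (Ioi t) := (integrableOn_aux A hA t ht).const_mul _
  have hnn : 0 ≤ᵐ[volume.restrict (Ioi t)]
      fun r : ℝ => (Real.exp (A * t ^ 2) / t) * (r * Real.exp (-A * r ^ 2)) := by
    filter_upwards [ae_restrict_mem measurableSet_Ioi] with r hr
    have : (0:ℝ) < r := ht.trans hr
    positivity
  calc (∫⁻ r in Ioi t, ENNReal.ofReal ((r / t) * Real.exp (A * t ^ 2 - A * r ^ 2)))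
      = ∫⁻ r in Ioi t,
        ENNReal.ofReal ((Real.exp (A * t ^ 2) / t) * (r * Real.exp (-A * r ^ 2))) := by
        simp_rw [hfun]
    _ = ENNReal.ofReal (∫ r in Ioi t,
        (Real.exp (A * t ^ 2) / t) * (r * Real.exp (-A * r ^ 2))) :=
        (ofReal_integral_eq_lintegral_ofReal hint hnn).symm
    _ = ENNReal.ofReal (1 / (2 * A * t)) := by
        rw [integral_const_mul, integral_aux A hA t ht]
        congr 1
        rw [div_mul_div_comm, ← Real.exp_add]
        have : A * t ^ 2 + -A * t ^ 2 = 0 := by ring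
        rw [this, Real.exp_zero]
        ring

theorem double_integral_diverges (A : ℝ) (hA : 0 < A) :
    (∫⁻ t in Ioi (1:ℝ), ∫⁻ r in Ioi t,
        ENNReal.ofReal ((r / t) * Real.exp (A * t ^ 2 - A * r ^ 2))) = ⊤ := by
  have h1 : (∫⁻ t in Ioi (1:ℝ), ∫⁻ r in Ioi t,
        ENNReal.ofReal ((r / t) * Real.exp (A * t ^ 2 - A * r ^ 2)))
      = ∫⁻ t in Ioi (1:ℝ), ENNReal.ofReal (1 / (2 * A * t)) := by
    refine setLIntegral_congr_fun measurableSet_Ioi ?_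
    intro t ht
    exact inner_eq A hA t (lt_trans one_pos ht)
  rw [h1]
  by_contra h
  have hfin : (∫⁻ t in Ioi (1:ℝ), ENNReal.ofReal (1 / (2 * A * t))) < ⊤ := lt_top_iff_ne_top.mpr h
  have hmeas : AEStronglyMeasurable (fun t : ℝ => 1 / (2 * A * t)) (volume.restrict (Ioi 1)) := by
    apply Measurable.aestronglyMeasurable
    have h3 : Measurable fun t : ℝ => (2*A)⁻¹ * t⁻¹ := measurable_inv.const_mul _
    have heq : (fun t : ℝ => 1 / (2 * A * t)) = fun t : ℝ => (2*A)⁻¹ * t⁻¹ := by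
      funext t; rw [one_div, mul_inv]
    rw [heq]; exact h3
  have hnn : 0 ≤ᵐ[volume.restrict (Ioi (1:ℝ))] fun t : ℝ => 1 / (2 * A * t) := by
    filter_upwards [ae_restrict_mem measurableSet_Ioi] with t htt
    have : (0:ℝ) < t := lt_trans one_pos htt
    positivity
  have hint : IntegrableOn (fun t : ℝ => 1 / (2 * A * t)) (Ioi 1) :=
    ⟨hmeas, (hasFiniteIntegral_iff_ofReal hnn).mpr hfin⟩
  have hint2 : IntegrableOn (fun t : ℝ => t ^ (-1 : ℝ)) (Ioi (1:ℝ)) := by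
    have h2 := hint.const_mul (2 * A)
    refine h2.congr (Filter.EventuallyEq.symm ?_)
    filter_upwards [ae_restrict_mem measurableSet_Ioi] with t htt
    have ht : (0:ℝ) < t := lt_trans one_pos htt
    rw [Real.rpow_neg_one]
    field_simp
  rw [integrableOn_Ioi_rpow_iff one_pos] at hint2
  linarith
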